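/- Let s be a real number with 0 < |s| < 1 and s ≠ 0, and let T_X be the 3×3 real symmetric matrix with (T_X)_{12} = (T_X)_{21} = 1 and all other entries 0. Then the shifted QR step applied to T_X with shift s yields F(s, T_X) = (1/(1+s^2)) · [[-2s, 1-s^2, 0], [1-s^2, 2s, 0], [0, 0, 0]]; in particular this expression extends continuously to s = 0 with value T_X. -/

import Mathlib

open Matrix

noncomputable def TX : Matrix (Fin 3) (Fin 3) ℝ := !![0,1,0;1,0,0;0,0,0]

/-- The matrix-valued expression for the shifted QR step on `TX`. -/
noncomputable def Fstep (s : ℝ) : Matrix (Fin 3) (Fin 3) ℝ :=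
  (1/(1+s^2)) • !![-2*s, 1-s^2, 0; 1-s^2, 2*s, 0; 0, 0, 0]

set_option maxHeartbeats 1000000 in
theorem qr_step_aux (s : ℝ) (hs0 : 0 < |s|) (hs1 : |s| < 1) (hs : s ≠ 0)
    (Q R : Matrix (Fin 3) (Fin 3) ℝ)
    (hQ : Qᵀ * Q = 1)
    (hT : R.BlockTriangular id)
    (hpos : ∀ i, 0 < R i i)
    (hQR : TX - s • (1 : Matrix (Fin 3) (Fin 3) ℝ) = Q * R) :
    Qᵀ * TX * Q = Fstep s := by
  have r10 : R 1 0 = 0 := hT (by decide)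
  have r20 : R 2 0 = 0 := hT (by decide)
  have r21 : R 2 1 = 0 := hT (by decide)
  have ha := hpos 0
  have hd := hpos 1
  have hane : R 0 0 ≠ 0 := ha.ne'
  have h1s : s^2 < 1 := by nlinarith [sq_abs s, abs_nonneg s]
  have hM : ∀ i j, (TX - s • (1 : Matrix (Fin 3) (Fin 3) ℝ)) i j = (Q*R) i j := by
    rw [hQR]; intro i j; rfl
  have e00 := hM 0 0; have e10 := hM 1 0; have e20 := hM 2 0
  have e01 := hM 0 1; have e11 := hM 1 1; have e21 := hM 2 1
  simp [TX, Matrix.mul_apply, Matrix.sub_apply, Matrix.smul_apply, Matrix.one_apply,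
    Fin.sum_univ_three, r10, r20, r21, Matrix.vecHead, Matrix.vecTail]
    at e00 e10 e20 e01 e11 e21
  have hO : ∀ i j, (Qᵀ*Q) i j = (1 : Matrix (Fin 3) (Fin 3) ℝ) i j := by rw [hQ]; intro i j; rfl
  have o00 := hO 0 0; have o01 := hO 0 1; have o02 := hO 0 2
  have o11 := hO 1 1; have o12 := hO 1 2
  simp [Matrix.mul_apply, Matrix.transpose_apply, Matrix.one_apply, Fin.sum_univ_three]
    at o00 o01 o02 o11 o12
  have hq20 : Q 2 0 = 0 := e20.resolve_right hane
  have hq21 : Q 2 1 = 0 := by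
    have h : Q 2 1 * R 1 1 = 0 := by rw [hq20] at e21; linarith
    exact (mul_eq_zero.1 h).resolve_right hd.ne'
  have hq00 : Q 0 0 = -s / R 0 0 := by field_simp; linarith
  have hq10 : Q 1 0 = 1 / R 0 0 := by field_simp; linarith
  have ha2 : R 0 0 ^ 2 = 1 + s ^ 2 := by
    rw [hq00, hq10, hq20] at o00
    field_simp at o00
    nlinarith [o00]
  have hq11 : Q 1 1 = s * Q 0 1 := by
    have h : (Q 1 1 - s * Q 0 1) * R 0 0 = 0 := by
      rw [hq00, hq10, hq20] at o01
      field_simp at o01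
      linear_combination R 0 0 * o01
    rcases mul_eq_zero.1 h with h | h
    · linarith
    · exact absurd h hane
  have key2 : 1 - s^2 = R 1 1 * Q 0 1 * (1 + s^2) := by
    have key : Q 1 0 + Q 0 0 * s = R 1 1 * (Q 1 0 * Q 0 1 - Q 0 0 * Q 1 1) := by
      linear_combination Q 1 0 * e01 - Q 0 0 * e11
    rw [hq00, hq10, hq11] at key
    field_simp at key
    linear_combination key
  have hQ01pos : 0 < Q 0 1 := by
    have hq : Q 0 1 = (1 - s^2) / (R 1 1 * (1+s^2)) := by
      field_simp
      linear_combination -key2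
    rw [hq]
    apply div_pos (by linarith) (by positivity)
  have hq01sq : Q 0 1 ^ 2 * (1 + s ^ 2) = 1 := by
    rw [hq11, hq21] at o11
    linear_combination o11
  have hq01 : Q 0 1 = 1 / R 0 0 := by
    have hr : (0:ℝ) < 1 / R 0 0 := by positivity
    have h : (Q 0 1 - 1 / R 0 0) * (Q 0 1 + 1 / R 0 0) = 0 := by
      field_simp
      linear_combination Q 0 1 ^ 2 * ha2 + hq01sq
    rcases mul_eq_zero.1 h with h | h
    · linarith
    · exfalso; linarith
  have hq11' : Q 1 1 = s / R 0 0 := by rw [hq11, hq01]; ring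
  have hq12 : Q 1 2 = s * Q 0 2 := by
    have h : (Q 1 2 - s * Q 0 2) * R 0 0 = 0 := by
      rw [hq00, hq10, hq20] at o02
      field_simp at o02
      linear_combination R 0 0 * o02
    rcases mul_eq_zero.1 h with h | h
    · linarith
    · exact absurd h hane
  have hden : (1:ℝ) + s^2 ≠ 0 := by positivity
  have hq02 : Q 0 2 = 0 := by
    rw [hq01, hq11', hq21, hq12] at o12
    field_simp at o12
    have h : Q 0 2 * (1 + s^2) = 0 := by linear_combination o12
    exact (mul_eq_zero.1 h).resolve_right hden
  have hq12' : Q 1 2 = 0 := by rw [hq12, hq02, mul_zero]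
  have f2 : (⟨2, by omega⟩ : Fin 3) = (2 : Fin 3) := rfl
  clear hQR hM hO hQ hT hpos e00 e10 e20 e01 e11 e21 o00 o01 o02 o11 o12
  clear key2 hq01sq hQ01pos hq11 hq12 r10 r20 r21 ha hd hs0 hs1 hs h1s hden
  ext i j
  fin_cases i <;> fin_cases j <;>
    simp [TX, Fstep, Matrix.mul_apply, Fin.sum_univ_three, f2,
      Matrix.vecHead, Matrix.vecTail, hq00, hq10, hq20, hq01, hq11', hq21, hq02, hq12'] <;>
    first
      | rfl
      | (rw [← ha2]; field_simp; ring)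

theorem stmt_0 :
    (∀ s : ℝ, 0 < |s| → |s| < 1 → s ≠ 0 →
      ∀ Q R : Matrix (Fin 3) (Fin 3) ℝ,
        Qᵀ * Q = 1 →
        R.BlockTriangular id →
        (∀ i, 0 < R i i) →
        TX - s • (1 : Matrix (Fin 3) (Fin 3) ℝ) = Q * R →
        Qᵀ * TX * Q = Fstep s) ∧
    Fstep 0 = TX ∧ ContinuousAt Fstep 0 := by
  refine ⟨fun s h1 h2 h3 Q R h4 h5 h6 h7 => qr_step_aux s h1 h2 h3 Q R h4 h5 h6 h7, ?_, ?_⟩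
  · simp [Fstep, TX]
  · apply Continuous.continuousAt
    apply continuous_matrix
    intro i j
    fin_cases i <;> fin_cases j <;>
      simp [Fstep, Matrix.smul_apply] <;> fun_prop (disch := intros; positivity)
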